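/- Fix positive constants c_i (i = 1,…,m) and d_r (r = 1,…,s), and define transformed data x'_{ij} = c_i x_{ij}, y'_{rj} = d_r y_{rj} for all j, and the transformed direction g'_i⁻ = c_i g_i⁻, g'_r⁺ = d_r g_r⁺. Then a triple (λ, τ⁻, τ⁺) belongs to the GDSE feasible set F_o(g) for the original data if and only if it belongs to the GDSE feasible set for the transformed data with direction g'; consequently the infimum of the fractional objective f over the feasible points with positive denominator is the same for the original and the transformed problems (unit invariance of ρ_o^F). -/

import Mathlib

open Finset

/-- GDSE feasible-set predicate: the evaluated DMU has input vector `u` and output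
vector `v`, benchmarked against the reference set `J = univ \ {o}` of the data
`x`, `y`, with RTS bounds `L ≤ Σλ ≤ U` and direction `(gm, gp)`. -/
def GDSEFeas {n m s : ℕ} (x : Fin n → Fin m → ℝ) (y : Fin n → Fin s → ℝ)
    (o : Fin n) (L U : ℝ) (gm : Fin m → ℝ) (gp : Fin s → ℝ)
    (u : Fin m → ℝ) (v : Fin s → ℝ)
    (lam : Fin n → ℝ) (tm : Fin m → ℝ) (tp : Fin s → ℝ) : Prop :=
  (∀ j ∈ Finset.univ.erase o, 0 ≤ lam j) ∧
  (∀ i, 0 ≤ tm i) ∧ (∀ r, 0 ≤ tp r) ∧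
  (∀ i, ∑ j ∈ Finset.univ.erase o, lam j * x j i ≤ u i + tm i * gm i) ∧
  (∀ r, v r - tp r * gp r ≤ ∑ j ∈ Finset.univ.erase o, lam j * y j r) ∧
  L ≤ ∑ j ∈ Finset.univ.erase o, lam j ∧
  ∑ j ∈ Finset.univ.erase o, lam j ≤ U

/-- The linear objective ℓ(τ⁻, τ⁺) = (1/m) Σᵢ τᵢ⁻ + (1/s) Σᵣ τᵣ⁺. -/
noncomputable def linObj (m s : ℕ) (tm : Fin m → ℝ) (tp : Fin s → ℝ) : ℝ :=
  (1 / (m : ℝ)) * ∑ i, tm i + (1 / (s : ℝ)) * ∑ r, tp r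

/-- The fractional objective f(τ⁻, τ⁺) = (1 + (1/m) Σᵢ τᵢ⁻) / (1 - (1/s) Σᵣ τᵣ⁺). -/
noncomputable def fracObj (m s : ℕ) (tm : Fin m → ℝ) (tp : Fin s → ℝ) : ℝ :=
  (1 + (1 / (m : ℝ)) * ∑ i, tm i) / (1 - (1 / (s : ℝ)) * ∑ r, tp r)

/-- The denominator of the fractional objective. -/
noncomputable def fracDen (s : ℕ) (tp : Fin s → ℝ) : ℝ :=
  1 - (1 / (s : ℝ)) * ∑ r, tp r

/-- Values of the fractional objective over the feasible points with positive denominator. -/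
def fracVals {n m s : ℕ} (x : Fin n → Fin m → ℝ) (y : Fin n → Fin s → ℝ)
    (o : Fin n) (L U : ℝ) (gm : Fin m → ℝ) (gp : Fin s → ℝ)
    (u : Fin m → ℝ) (v : Fin s → ℝ) : Set ℝ :=
  {w : ℝ | ∃ (lam : Fin n → ℝ) (tm : Fin m → ℝ) (tp : Fin s → ℝ),
    GDSEFeas x y o L U gm gp u v lam tm tp ∧ 0 < fracDen s tp ∧
    w = fracObj m s tm tp}

/-- Values of the linear objective over the feasible points. -/
def linVals {n m s : ℕ} (x : Fin n → Fin m → ℝ) (y : Fin n → Fin s → ℝ)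
    (o : Fin n) (L U : ℝ) (gm : Fin m → ℝ) (gp : Fin s → ℝ)
    (u : Fin m → ℝ) (v : Fin s → ℝ) : Set ℝ :=
  {w : ℝ | ∃ (lam : Fin n → ℝ) (tm : Fin m → ℝ) (tp : Fin s → ℝ),
    GDSEFeas x y o L U gm gp u v lam tm tp ∧ w = linObj m s tm tp}

/-- unit invariance of ρ_o^F. With cᵢ, dᵣ > 0 and transformed data
x'_{ij} = cᵢ x_{ij}, y'_{rj} = dᵣ y_{rj} and direction g'ᵢ⁻ = cᵢ gᵢ⁻, g'ᵣ⁺ = dᵣ gᵣ⁺,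
a triple is feasible for the original problem iff it is feasible for the
transformed one, and the infima of the fractional objective (over points with
positive denominator) coincide. -/
theorem stmt3 {n m s : ℕ}
    (x : Fin n → Fin m → ℝ) (y : Fin n → Fin s → ℝ) (o : Fin n)
    (hx : ∀ j i, 0 ≤ x j i) (hy : ∀ j r, 0 ≤ y j r)
    (L U : ℝ) (hL0 : 0 ≤ L) (hL1 : L ≤ 1) (hU : 1 ≤ U)
    (gm : Fin m → ℝ) (gp : Fin s → ℝ)
    (hgm : ∀ i, 0 ≤ gm i) (hgp : ∀ r, 0 ≤ gp r)
    (c : Fin m → ℝ) (d : Fin s → ℝ) (hc : ∀ i, 0 < c i) (hd : ∀ r, 0 < d r) :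
    (∀ (lam : Fin n → ℝ) (tm : Fin m → ℝ) (tp : Fin s → ℝ),
      GDSEFeas x y o L U gm gp (x o) (y o) lam tm tp ↔
      GDSEFeas (fun j i => c i * x j i) (fun j r => d r * y j r) o L U
        (fun i => c i * gm i) (fun r => d r * gp r)
        (fun i => c i * x o i) (fun r => d r * y o r) lam tm tp) ∧
    sInf (fracVals x y o L U gm gp (x o) (y o)) =
      sInf (fracVals (fun j i => c i * x j i) (fun j r => d r * y j r) o L U
        (fun i => c i * gm i) (fun r => d r * gp r)
        (fun i => c i * x o i) (fun r => d r * y o r)) := by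

  have key : ∀ (lam : Fin n → ℝ) (tm : Fin m → ℝ) (tp : Fin s → ℝ),
      GDSEFeas x y o L U gm gp (x o) (y o) lam tm tp ↔
      GDSEFeas (fun j i => c i * x j i) (fun j r => d r * y j r) o L U
        (fun i => c i * gm i) (fun r => d r * gp r)
        (fun i => c i * x o i) (fun r => d r * y o r) lam tm tp := by
    intro lam tm tp
    unfold GDSEFeas
    have hin : ∀ i : Fin m,
        (∑ j ∈ Finset.univ.erase o, lam j * x j i ≤ x o i + tm i * gm i) ↔
        (∑ j ∈ Finset.univ.erase o, lam j * (c i * x j i) ≤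
          c i * x o i + tm i * (c i * gm i)) := by
      intro i
      have h1 : ∑ j ∈ Finset.univ.erase o, lam j * (c i * x j i)
          = c i * ∑ j ∈ Finset.univ.erase o, lam j * x j i := by
        rw [Finset.mul_sum]; apply Finset.sum_congr rfl; intro j _; ring
      rw [h1]
      have h2 : c i * x o i + tm i * (c i * gm i)
          = c i * (x o i + tm i * gm i) := by ring
      rw [h2]
      exact (mul_le_mul_iff_right₀ (hc i)).symm
    have hout : ∀ r : Fin s,
        (y o r - tp r * gp r ≤ ∑ j ∈ Finset.univ.erase o, lam j * y j r) ↔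
        (d r * y o r - tp r * (d r * gp r) ≤
          ∑ j ∈ Finset.univ.erase o, lam j * (d r * y j r)) := by
      intro r
      have h1 : ∑ j ∈ Finset.univ.erase o, lam j * (d r * y j r)
          = d r * ∑ j ∈ Finset.univ.erase o, lam j * y j r := by
        rw [Finset.mul_sum]; apply Finset.sum_congr rfl; intro j _; ring
      rw [h1]
      have h2 : d r * y o r - tp r * (d r * gp r)
          = d r * (y o r - tp r * gp r) := by ring
      rw [h2]
      exact (mul_le_mul_iff_right₀ (hd r)).symm
    constructor
    · rintro ⟨a, b, e, h4, h5, h6, h7⟩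
      exact ⟨a, b, e, fun i => (hin i).mp (h4 i), fun r => (hout r).mp (h5 r), h6, h7⟩
    · rintro ⟨a, b, e, h4, h5, h6, h7⟩
      exact ⟨a, b, e, fun i => (hin i).mpr (h4 i), fun r => (hout r).mpr (h5 r), h6, h7⟩
  refine ⟨key, ?_⟩
  congr 1
  ext w
  constructor
  · rintro ⟨lam, tm, tp, hf, hden, hw⟩
    exact ⟨lam, tm, tp, (key lam tm tp).mp hf, hden, hw⟩
  · rintro ⟨lam, tm, tp, hf, hden, hw⟩
    exact ⟨lam, tm, tp, (key lam tm tp).mpr hf, hden, hw⟩
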